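/- arXiv:2106.14122 — 2 statements merged into one kernel-verified Lean document; each statement's English description precedes it below -/
import Mathlib

section
/- Let A be a symmetric positive definite d×d real matrix with eigenvalues 0 < λ₁(A) ≤ ... ≤ λ_d(A), and let α ∈ ℝ^d. For a subset T ⊆ [d] of size p, define f(T) = α_T^⊤ (A_{T,T})^{-1} α_T and g(T) = α_T^⊤ (diag(A_{T,T}))^{-1} α_T, where A_{T,T} is the principal submatrix indexed by T. Let T* maximize f over subsets of size p, and let T̂ maximize g over subsets of size p (equivalently, T̂ consists of the indices of the p largest entries of diag(A)^{-1} α^{⊙2}). Then 0 ≤ f(T*) − f(T̂) ≤ 2(λ₁(A)^{-1} − λ_d(A)^{-1}) ‖α‖². -/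
open Matrix Finset


lemma qf_eig_bounds {n : Type*} [Fintype n] [DecidableEq n] {A : Matrix n n ℝ}
    (hA : A.IsHermitian) {a b : ℝ} (ha : ∀ i, a ≤ hA.eigenvalues i)
    (hb : ∀ i, hA.eigenvalues i ≤ b) (x : n → ℝ) :
    a * (x ⬝ᵥ x) ≤ x ⬝ᵥ A *ᵥ x ∧ x ⬝ᵥ A *ᵥ x ≤ b * (x ⬝ᵥ x) := by
  set U : Matrix n n ℝ := (hA.eigenvectorUnitary : Matrix n n ℝ) with hU
  set y : n → ℝ := star U *ᵥ x with hy
  have hUU : U * star U = 1 := Matrix.mem_unitaryGroup_iff.mp hA.eigenvectorUnitary.2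
  have hUU' : star U * U = 1 := Matrix.mem_unitaryGroup_iff'.mp hA.eigenvectorUnitary.2
  have hxU : x ᵥ* U = y := by rw [hy, ← mulVec_transpose]; congr 1
  have hq : x ⬝ᵥ A *ᵥ x = ∑ i, hA.eigenvalues i * (y i)^2 := by
    conv_lhs => rw [hA.spectral_theorem, Unitary.conjStarAlgAut_apply]
    rw [← mulVec_mulVec, ← mulVec_mulVec, dotProduct_mulVec, hxU, ← hy]
    simp [dotProduct, mulVec_diagonal, RCLike.ofReal_real_eq_id, sq]
    exact Finset.sum_congr rfl fun i _ => by ring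
  have hn : x ⬝ᵥ x = ∑ i, (y i)^2 := by
    have hx : U *ᵥ y = x := by rw [hy, mulVec_mulVec, hUU, one_mulVec]
    calc x ⬝ᵥ x = (U *ᵥ y) ⬝ᵥ (U *ᵥ y) := by rw [hx]
    _ = (y ᵥ* (star U)) ⬝ᵥ (U *ᵥ y) := by rw [← mulVec_transpose]; congr 1
    _ = y ⬝ᵥ ((star U * U) *ᵥ y) := by rw [← dotProduct_mulVec, mulVec_mulVec]
    _ = ∑ i, (y i)^2 := by rw [hUU', one_mulVec]; simp [dotProduct, sq]
  constructor
  · rw [hq, hn, Finset.mul_sum]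
    exact Finset.sum_le_sum fun i _ => mul_le_mul_of_nonneg_right (ha i) (sq_nonneg _)
  · rw [hq, hn, Finset.mul_sum]
    exact Finset.sum_le_sum fun i _ => mul_le_mul_of_nonneg_right (hb i) (sq_nonneg _)

lemma scan_dot_nonneg {n : Type*} [Fintype n] (v : n → ℝ) : 0 ≤ v ⬝ᵥ v :=
  Finset.sum_nonneg fun i _ => mul_self_nonneg _

lemma scan_B_cs {n : Type*} [Fintype n] {B : Matrix n n ℝ}
    (hsym : ∀ u v : n → ℝ, u ⬝ᵥ B *ᵥ v = v ⬝ᵥ B *ᵥ u)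
    (hpos : ∀ v : n → ℝ, 0 ≤ v ⬝ᵥ B *ᵥ v) (u v : n → ℝ) :
    (u ⬝ᵥ B *ᵥ v)^2 ≤ (u ⬝ᵥ B *ᵥ u) * (v ⬝ᵥ B *ᵥ v) := by
  have h : ∀ t : ℝ, 0 ≤ (v ⬝ᵥ B *ᵥ v) * (t*t) + (2*(u ⬝ᵥ B *ᵥ v))*t + (u ⬝ᵥ B *ᵥ u) := by
    intro t
    have h0 := hpos (u + t • v)
    have hexp : (u + t • v) ⬝ᵥ B *ᵥ (u + t • v)
        = (v ⬝ᵥ B *ᵥ v) * (t*t) + (2*(u ⬝ᵥ B *ᵥ v))*t + (u ⬝ᵥ B *ᵥ u) := by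
      simp only [mulVec_add, mulVec_smul, dotProduct_add, add_dotProduct,
        dotProduct_smul, smul_dotProduct, smul_eq_mul]
      rw [hsym v u]
      ring
    linarith [hexp ▸ h0]
  have hd := discrim_le_zero h
  rw [discrim] at hd
  nlinarith [hd]

lemma scan_inv_qf_bounds {n : Type*} [Fintype n] [DecidableEq n] {B : Matrix n n ℝ} {a b : ℝ}
    (ha : 0 < a) (hdet : IsUnit B.det)
    (hsym : ∀ u v : n → ℝ, u ⬝ᵥ B *ᵥ v = v ⬝ᵥ B *ᵥ u)
    (hlow : ∀ v, a * (v ⬝ᵥ v) ≤ v ⬝ᵥ B *ᵥ v)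
    (hup : ∀ v, v ⬝ᵥ B *ᵥ v ≤ b * (v ⬝ᵥ v)) (x : n → ℝ) :
    b⁻¹ * (x ⬝ᵥ x) ≤ x ⬝ᵥ B⁻¹ *ᵥ x ∧ x ⬝ᵥ B⁻¹ *ᵥ x ≤ a⁻¹ * (x ⬝ᵥ x) := by
  have hpos : ∀ v : n → ℝ, 0 ≤ v ⬝ᵥ B *ᵥ v := fun v =>
    le_trans (mul_nonneg ha.le (scan_dot_nonneg v)) (hlow v)
  set w := B⁻¹ *ᵥ x with hw
  have hBw : B *ᵥ w = x := by rw [hw, mulVec_mulVec, mul_nonsing_inv _ hdet, one_mulVec]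
  have hq : x ⬝ᵥ B⁻¹ *ᵥ x = w ⬝ᵥ B *ᵥ w := by
    rw [← hw]
    conv_lhs => rw [← hBw]
    exact dotProduct_comm _ _
  have hq0 : 0 ≤ w ⬝ᵥ B *ᵥ w := hpos w
  have ht0 : 0 ≤ x ⬝ᵥ x := scan_dot_nonneg x
  have hww : 0 ≤ w ⬝ᵥ w := scan_dot_nonneg w
  constructor
  · -- lower bound
    rcases eq_or_lt_of_le ht0 with h0 | htpos
    · rw [hq, ← h0, mul_zero]; exact hq0
    · have hb : 0 < b := by
        have h1 := hlow x
        have h2 := hup x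
        nlinarith
      have htw : x ⬝ᵥ x = w ⬝ᵥ B *ᵥ x := by
        nth_rewrite 1 [← hBw]
        rw [dotProduct_comm, hsym x w]
      have hcsb := scan_B_cs hsym hpos w x
      have h3 : (x ⬝ᵥ x) * (x ⬝ᵥ x) ≤ ((w ⬝ᵥ B *ᵥ w) * b) * (x ⬝ᵥ x) := by
        calc (x ⬝ᵥ x) * (x ⬝ᵥ x) = (w ⬝ᵥ B *ᵥ x)^2 := by rw [← htw]; ring
        _ ≤ (w ⬝ᵥ B *ᵥ w) * (x ⬝ᵥ B *ᵥ x) := hcsb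
        _ ≤ ((w ⬝ᵥ B *ᵥ w) * b) * (x ⬝ᵥ x) := by
            rw [mul_assoc]
            exact mul_le_mul_of_nonneg_left (hup x) hq0
      have h4 : x ⬝ᵥ x ≤ (w ⬝ᵥ B *ᵥ w) * b := le_of_mul_le_mul_right h3 htpos
      rw [hq, inv_mul_eq_div, div_le_iff₀ hb]
      exact h4
  · -- upper bound
    have hcs : (x ⬝ᵥ w)^2 ≤ (x ⬝ᵥ x) * (w ⬝ᵥ w) := by
      have := Finset.sum_mul_sq_le_sq_mul_sq Finset.univ x w
      simpa [dotProduct, sq, Finset.mul_sum] using this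
    have hxw : x ⬝ᵥ w = w ⬝ᵥ B *ᵥ w := by rw [← hq, hw]
    have h1 := hlow w
    rw [hq]
    rcases eq_or_lt_of_le hq0 with h0 | hqpos
    · rw [← h0]
      positivity
    · rw [hxw] at hcs
      have h3 : ((w ⬝ᵥ B *ᵥ w) * a) * (w ⬝ᵥ B *ᵥ w) ≤ (x ⬝ᵥ x) * (w ⬝ᵥ B *ᵥ w) := by
        nlinarith [mul_le_mul_of_nonneg_left hcs ha.le, mul_le_mul_of_nonneg_left h1 ht0]
      have h4 := le_of_mul_le_mul_right h3 hqpos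
      rw [inv_mul_eq_div, le_div_iff₀ ha]
      exact h4

lemma scan_sum_ext {d : ℕ} (T : Finset (Fin d)) (v : ↥T → ℝ) (F : Fin d → ℝ) :
    ∑ i, (if h : i ∈ T then v ⟨i, h⟩ else 0) * F i = ∑ i : ↥T, v i * F ↑i := by
  have h1 : ∑ i ∈ T, (if h : i ∈ T then v ⟨i, h⟩ else 0) * F i = ∑ i : ↥T, v i * F ↑i := by
    rw [← Finset.sum_coe_sort T (fun i => (if h : i ∈ T then v ⟨i, h⟩ else 0) * F i)]
    refine Finset.sum_congr rfl fun i _ => ?_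
    rw [dif_pos i.2]
  rw [← h1]
  exact (Finset.sum_subset (Finset.subset_univ T)
    (fun i _ hi => by rw [dif_neg hi, zero_mul])).symm

lemma scan_ext_dot {d : ℕ} (A : Matrix (Fin d) (Fin d) ℝ) (T : Finset (Fin d)) (v : ↥T → ℝ) :
    ((fun i => if h : i ∈ T then v ⟨i, h⟩ else 0) ⬝ᵥ
        (fun i => if h : i ∈ T then v ⟨i, h⟩ else 0) = v ⬝ᵥ v) ∧
    ((fun i => if h : i ∈ T then v ⟨i, h⟩ else 0) ⬝ᵥ
        A *ᵥ (fun i => if h : i ∈ T then v ⟨i, h⟩ else 0)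
      = v ⬝ᵥ (A.submatrix (fun i : T => (i : Fin d)) (fun j : T => (j : Fin d))) *ᵥ v) := by
  set x : Fin d → ℝ := fun i => if h : i ∈ T then v ⟨i, h⟩ else 0 with hxdef
  have hxv : ∀ i : ↥T, x ↑i = v i := fun i => dif_pos i.2
  constructor
  · calc x ⬝ᵥ x = ∑ i : ↥T, v i * x ↑i := scan_sum_ext T v x
    _ = v ⬝ᵥ v := Finset.sum_congr rfl fun i _ => by rw [hxv]
  · have hmv : ∀ k, (A *ᵥ x) k = ∑ j : ↥T, A k ↑j * v j := by
      intro k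
      show ∑ j, A k j * x j = _
      calc ∑ j, A k j * x j = ∑ j, x j * A k j := by simp_rw [mul_comm]
      _ = ∑ j : ↥T, v j * A k ↑j := scan_sum_ext T v _
      _ = ∑ j : ↥T, A k ↑j * v j := by simp_rw [mul_comm]
    calc x ⬝ᵥ A *ᵥ x = ∑ i : ↥T, v i * (A *ᵥ x) ↑i := scan_sum_ext T v _
    _ = ∑ i : ↥T, v i * ∑ j : ↥T, A ↑i ↑j * v j := by simp_rw [hmv]
    _ = v ⬝ᵥ (A.submatrix (fun i : T => (i : Fin d)) (fun j : T => (j : Fin d))) *ᵥ v := by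
        simp [dotProduct, mulVec, submatrix_apply]

lemma scan_sym_dot {n : Type*} [Fintype n] {B : Matrix n n ℝ} (hB : B.IsHermitian)
    (u v : n → ℝ) : u ⬝ᵥ B *ᵥ v = v ⬝ᵥ B *ᵥ u := by
  have hBt : Bᵀ = B := by
    ext i j
    simpa using hB.apply i j
  rw [dotProduct_mulVec, ← mulVec_transpose, hBt]
  exact dotProduct_comm _ _

/-- Approximation quality of the diagonal surrogate for the scan statistic:
if `T*` maximizes `f(T) = α_T^⊤ (A_{T,T})⁻¹ α_T` and `T̂` maximizes
`g(T) = α_T^⊤ diag(A_{T,T})⁻¹ α_T` over size-`p` subsets, then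
`0 ≤ f(T*) − f(T̂) ≤ 2(λ₁(A)⁻¹ − λ_d(A)⁻¹)‖α‖²`. -/
theorem scan_diag_approximation {d p : ℕ} (hd : 0 < d) (hp : 0 < p) (hpd : p ≤ d)
    (A : Matrix (Fin d) (Fin d) ℝ) (hA : A.PosDef) (α : Fin d → ℝ)
    (f g : Finset (Fin d) → ℝ)
    (hf : ∀ T : Finset (Fin d),
      f T = dotProduct (fun i : T => α i)
        ((A.submatrix (fun i : T => (i : Fin d)) (fun j : T => (j : Fin d)))⁻¹ *ᵥ
          (fun i : T => α i)))
    (hg : ∀ T : Finset (Fin d),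
      g T = dotProduct (fun i : T => α i)
        ((Matrix.diagonal (fun i : T => A i i))⁻¹ *ᵥ (fun i : T => α i)))
    (Tstar That : Finset (Fin d))
    (hTstar : Tstar.card = p ∧ ∀ T : Finset (Fin d), T.card = p → f T ≤ f Tstar)
    (hThat : That.card = p ∧ ∀ T : Finset (Fin d), T.card = p → g T ≤ g That)
    (lam1 lamd : ℝ)
    (hlam1 : lam1 = Finset.univ.inf'
      (⟨⟨0, hd⟩, Finset.mem_univ _⟩ : (Finset.univ : Finset (Fin d)).Nonempty)
      hA.1.eigenvalues)
    (hlamd : lamd = Finset.univ.sup'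
      (⟨⟨0, hd⟩, Finset.mem_univ _⟩ : (Finset.univ : Finset (Fin d)).Nonempty)
      hA.1.eigenvalues) :
    0 ≤ f Tstar - f That ∧
      f Tstar - f That ≤ 2 * (lam1⁻¹ - lamd⁻¹) * ∑ i, α i ^ 2 := by
  have ha1 : ∀ i, lam1 ≤ hA.1.eigenvalues i := fun i => by
    rw [hlam1]; exact Finset.inf'_le _ (Finset.mem_univ i)
  have hb1 : ∀ i, hA.1.eigenvalues i ≤ lamd := fun i => by
    rw [hlamd]; exact Finset.le_sup' _ (Finset.mem_univ i)
  have hlam1pos : 0 < lam1 := by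
    obtain ⟨i, -, hi⟩ := Finset.exists_mem_eq_inf' (⟨⟨0, hd⟩, Finset.mem_univ _⟩ :
      (Finset.univ : Finset (Fin d)).Nonempty) hA.1.eigenvalues
    rw [hlam1, ← hlam1, hlam1, hi]
    exact hA.eigenvalues_pos i
  have hlam : lam1 ≤ lamd := le_trans (ha1 ⟨0, hd⟩) (hb1 ⟨0, hd⟩)
  have hlamdpos : 0 < lamd := lt_of_lt_of_le hlam1pos hlam
  have hqf := fun x => qf_eig_bounds hA.1 ha1 hb1 x
  -- bounds for f
  have hfb : ∀ T : Finset (Fin d),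
      lamd⁻¹ * (∑ i : ↥T, (α ↑i)^2) ≤ f T ∧ f T ≤ lam1⁻¹ * (∑ i : ↥T, (α ↑i)^2) := by
    intro T
    set B := A.submatrix (fun i : T => (i : Fin d)) (fun j : T => (j : Fin d)) with hB
    have hBpsd : B.PosSemidef := hA.posSemidef.submatrix _
    have hsymB := scan_sym_dot hBpsd.1
    have hlowB : ∀ v : ↥T → ℝ, lam1 * (v ⬝ᵥ v) ≤ v ⬝ᵥ B *ᵥ v := by
      intro v
      obtain ⟨h1, h2⟩ := scan_ext_dot A T v
      rw [← h1, ← hB] at *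
      rw [← h2]
      exact (hqf _).1
    have hupB : ∀ v : ↥T → ℝ, v ⬝ᵥ B *ᵥ v ≤ lamd * (v ⬝ᵥ v) := by
      intro v
      obtain ⟨h1, h2⟩ := scan_ext_dot A T v
      rw [← h1, ← hB] at *
      rw [← h2]
      exact (hqf _).2
    have hBpd : B.PosDef := by
      refine Matrix.PosDef.of_dotProduct_mulVec_pos hBpsd.1 fun v hv => ?_
      have hvv : 0 < v ⬝ᵥ v := by
        rcases (scan_dot_nonneg v).lt_or_eq with h | h
        · exact h
        · exact absurd (dotProduct_self_eq_zero.mp h.symm) hv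
      have : (0:ℝ) < v ⬝ᵥ B *ᵥ v :=
        lt_of_lt_of_le (by positivity) (hlowB v)
      simpa using this
    have hdet : IsUnit B.det := (Matrix.isUnit_iff_isUnit_det B).mp hBpd.isUnit
    have hbnd := scan_inv_qf_bounds hlam1pos hdet hsymB hlowB hupB (fun i : T => α ↑i)
    have hvv : (fun i : T => α ↑i) ⬝ᵥ (fun i : T => α ↑i) = ∑ i : ↥T, (α ↑i)^2 := by
      simp [dotProduct, sq]
    rw [hvv] at hbnd
    rw [hf T]
    exact hbnd
  -- diagonal entries bounds
  have hdiagb : ∀ i, lam1 ≤ A i i ∧ A i i ≤ lamd := by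
    intro i
    have h := hqf (Pi.single i 1)
    have h1 : (Pi.single i 1 : Fin d → ℝ) ⬝ᵥ Pi.single i 1 = 1 := by
      rw [single_dotProduct]; simp
    have h2 : (Pi.single i 1 : Fin d → ℝ) ⬝ᵥ A *ᵥ Pi.single i 1 = A i i := by
      rw [mulVec_single, single_dotProduct]; simp
    rw [h1, h2] at h
    simpa using h
  -- bounds for g
  have hgb : ∀ T : Finset (Fin d),
      lamd⁻¹ * (∑ i : ↥T, (α ↑i)^2) ≤ g T ∧ g T ≤ lam1⁻¹ * (∑ i : ↥T, (α ↑i)^2) := by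
    intro T
    have hAne : ∀ i : ↥T, A ↑i ↑i ≠ 0 := fun i =>
      (lt_of_lt_of_le hlam1pos (hdiagb ↑i).1).ne'
    have hgT : g T = ∑ i : ↥T, (α ↑i)^2 * (A ↑i ↑i)⁻¹ := by
      have hdiaginv : (Matrix.diagonal (fun i : T => A i i))⁻¹
          = Matrix.diagonal (fun i : T => (A ↑i ↑i)⁻¹) := by
        apply Matrix.inv_eq_right_inv
        rw [Matrix.diagonal_mul_diagonal,
          show (fun i : T => A ↑i ↑i * (A ↑i ↑i)⁻¹) = fun _ => 1 from
            funext fun i => mul_inv_cancel₀ (hAne i), Matrix.diagonal_one]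
      rw [hg T, hdiaginv]
      simp only [dotProduct, mulVec_diagonal]
      exact Finset.sum_congr rfl fun i _ => by ring
    constructor
    · rw [hgT, Finset.mul_sum]
      refine Finset.sum_le_sum fun i _ => ?_
      rw [mul_comm (lamd⁻¹)]
      exact mul_le_mul_of_nonneg_left
        (inv_anti₀ (lt_of_lt_of_le hlam1pos (hdiagb ↑i).1) (hdiagb ↑i).2) (sq_nonneg _)
    · rw [hgT, Finset.mul_sum]
      refine Finset.sum_le_sum fun i _ => ?_
      rw [mul_comm (lam1⁻¹)]
      exact mul_le_mul_of_nonneg_left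
        (inv_anti₀ hlam1pos (hdiagb ↑i).1) (sq_nonneg _)
  -- total sums
  have hSle : ∀ T : Finset (Fin d), (∑ i : ↥T, (α ↑i)^2) ≤ ∑ i, α i ^ 2 := by
    intro T
    rw [Finset.sum_coe_sort T (fun i => α i ^ 2)]
    exact Finset.sum_le_sum_of_subset_of_nonneg (Finset.subset_univ T)
      (fun i _ _ => sq_nonneg _)
  have hSnn : ∀ T : Finset (Fin d), (0:ℝ) ≤ ∑ i : ↥T, (α ↑i)^2 := fun T =>
    Finset.sum_nonneg fun i _ => sq_nonneg _
  have hΔnn : (0:ℝ) ≤ lam1⁻¹ - lamd⁻¹ := sub_nonneg.mpr (inv_anti₀ hlam1pos hlam)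
  obtain ⟨hc1, hopt_f⟩ := hTstar
  obtain ⟨hc2, hopt_g⟩ := hThat
  have h1 : f That ≤ f Tstar := hopt_f That hc2
  have h2 : g Tstar ≤ g That := hopt_g Tstar hc1
  obtain ⟨hfs1, hfs2⟩ := hfb Tstar
  obtain ⟨hgs1, hgs2⟩ := hgb Tstar
  obtain ⟨hfh1, hfh2⟩ := hfb That
  obtain ⟨hgh1, hgh2⟩ := hgb That
  refine ⟨by linarith, ?_⟩
  nlinarith [mul_le_mul_of_nonneg_left (hSle Tstar) hΔnn,
    mul_le_mul_of_nonneg_left (hSle That) hΔnn, hSnn Tstar, hSnn That]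
end

section
/- If X is a chi-square random variable with d degrees of freedom, then for all x > 0, P(X ≥ d + 2√(dx) + 2x) ≤ e^{−x}. -/
open MeasureTheory ProbabilityTheory Real

lemma gauss_sq_integrand_eq {t : ℝ} :
    ∀ y : ℝ, gaussianPDFReal 0 1 y * Real.exp (t * y ^ 2)
      = (Real.sqrt (2 * Real.pi))⁻¹ * Real.exp (-(1/2 - t) * y ^ 2) := by
  intro y
  rw [gaussianPDFReal, mul_assoc, ← Real.exp_add]
  norm_num
  ring_nf
  tauto

lemma integrable_gauss_sq {t : ℝ} (ht : t < 1/2) :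
    Integrable (fun y => Real.exp (t * y ^ 2)) (gaussianReal 0 1) := by
  rw [gaussianReal_of_var_ne_zero 0 one_ne_zero]
  have hpdf : gaussianPDF 0 1 = fun y => ((gaussianPDFReal 0 1 y).toNNReal : ENNReal) := by
    ext y; simp [gaussianPDF, ENNReal.ofReal]
  rw [hpdf, integrable_withDensity_iff_integrable_smul
    ((measurable_gaussianPDFReal 0 1).real_toNNReal)]
  have : (fun y : ℝ => (gaussianPDFReal 0 1 y).toNNReal • Real.exp (t * y ^ 2))
      = fun y => (Real.sqrt (2 * Real.pi))⁻¹ * Real.exp (-(1/2 - t) * y ^ 2) := by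
    ext y
    rw [NNReal.smul_def, Real.coe_toNNReal _ (gaussianPDFReal_nonneg 0 1 y)]
    exact gauss_sq_integrand_eq y
  rw [this]
  exact (integrable_exp_neg_mul_sq (by linarith)).const_mul _

lemma integral_gauss_sq {t : ℝ} (ht : t < 1/2) :
    ∫ y, Real.exp (t * y ^ 2) ∂(gaussianReal 0 1) = Real.sqrt ((1 - 2*t)⁻¹) := by
  rw [gaussianReal_of_var_ne_zero 0 one_ne_zero]
  have hpdf : gaussianPDF 0 1 = fun y => ((gaussianPDFReal 0 1 y).toNNReal : ENNReal) := by
    ext y; simp [gaussianPDF, ENNReal.ofReal]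
  rw [hpdf, integral_withDensity_eq_integral_smul
    ((measurable_gaussianPDFReal 0 1).real_toNNReal)]
  have : (fun y : ℝ => (gaussianPDFReal 0 1 y).toNNReal • Real.exp (t * y ^ 2))
      = fun y => (Real.sqrt (2 * Real.pi))⁻¹ * Real.exp (-(1/2 - t) * y ^ 2) := by
    ext y
    rw [NNReal.smul_def, Real.coe_toNNReal _ (gaussianPDFReal_nonneg 0 1 y)]
    exact gauss_sq_integrand_eq y
  rw [this, integral_const_mul, integral_gaussian]
  rw [← Real.sqrt_inv, ← Real.sqrt_mul (by positivity)]
  congr 1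
  have hπ : (0:ℝ) < Real.pi := Real.pi_pos
  have h1 : (1:ℝ)/2 - t ≠ 0 := by linarith
  have h2 : (1:ℝ) - 2*t ≠ 0 := by linarith
  field_simp

/-- Birgé's concentration inequality for the chi-square distribution: if `X` is the sum of
squares of `d` independent standard Gaussian random variables, then for all `x > 0`,
`P(X ≥ d + 2√(dx) + 2x) ≤ exp(−x)`. -/
theorem chi_square_tail_bound {Ω : Type*} [MeasurableSpace Ω]
    (μ : Measure Ω) [IsProbabilityMeasure μ]
    {d : ℕ} (hd : 1 ≤ d) (G : Fin d → Ω → ℝ)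
    (hmeas : ∀ i, Measurable (G i))
    (hindep : iIndepFun G μ)
    (hgauss : ∀ i, μ.map (G i) = gaussianReal 0 1)
    (x : ℝ) (hx : 0 < x) :
    μ {ω | (d : ℝ) + 2 * Real.sqrt (d * x) + 2 * x ≤ ∑ i, (G i ω) ^ 2}
      ≤ ENNReal.ofReal (Real.exp (-x)) := by
  have hd0 : (0:ℝ) < d := by exact_mod_cast hd
  set s : ℝ := Real.sqrt (d * x) with hs_def
  have hs : 0 ≤ s := Real.sqrt_nonneg _
  have hsq : s ^ 2 = d * x := Real.sq_sqrt (by positivity)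
  set a : ℝ := (d:ℝ) + 2 * s + 2 * x with ha_def
  have had : (d:ℝ) < a := by simp only [ha_def]; nlinarith
  have ha0 : (0:ℝ) < a := hd0.trans had
  set t : ℝ := (1 - d/a)/2 with ht_def
  have hda1 : (d:ℝ)/a ≤ 1 := (div_le_one ha0).2 had.le
  have hda0 : 0 < (d:ℝ)/a := div_pos hd0 ha0
  have ht0 : 0 ≤ t := by simp only [ht_def]; linarith
  have ht : t < 1/2 := by simp only [ht_def]; linarith
  have h1t : 1 - 2*t = (d:ℝ)/a := by simp only [ht_def]; ring
  set Y : Fin d → Ω → ℝ := fun i ω => G i ω ^ 2 with hY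
  have hYmeas : ∀ i, Measurable (Y i) := fun i => (hmeas i).pow_const 2
  have hYindep : iIndepFun Y μ :=
    hindep.comp (fun _ y => y ^ 2) (fun _ => measurable_id.pow_const 2)
  have hint : ∀ i, Integrable (fun ω => Real.exp (t * Y i ω)) μ := by
    intro i
    have h2 : Integrable (fun y : ℝ => Real.exp (t * y ^ 2)) (μ.map (G i)) := by
      rw [hgauss i]; exact integrable_gauss_sq ht
    rw [integrable_map_measure
      (Measurable.aestronglyMeasurable (by fun_prop))
      (hmeas i).aemeasurable] at h2
    exact h2
  have hmgf : ∀ i, mgf (Y i) μ t = Real.sqrt ((1 - 2*t)⁻¹) := by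
    intro i
    have h2 : ∫ ω, Real.exp (t * Y i ω) ∂μ
        = ∫ y, Real.exp (t * y ^ 2) ∂(μ.map (G i)) := by
      rw [integral_map (hmeas i).aemeasurable
        (Measurable.aestronglyMeasurable (by fun_prop))]
    rw [mgf, h2, hgauss i, integral_gauss_sq ht]
  have hXint : Integrable (fun ω => Real.exp (t * (∑ i, Y i) ω)) μ :=
    hYindep.integrable_exp_mul_sum hYmeas (fun i _ => hint i)
  have hcher := measure_ge_le_exp_mul_mgf (μ := μ) (X := ∑ i, Y i) a ht0 hXint
  rw [hYindep.mgf_sum hYmeas] at hcher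
  simp only [hmgf, Finset.prod_const, Finset.card_univ, Fintype.card_fin] at hcher
  -- rewrite the set
  have hset : {ω | a ≤ (∑ i, Y i) ω} = {ω | (d:ℝ) + 2 * s + 2 * x ≤ ∑ i, G i ω ^ 2} := by
    ext ω; simp [hY, ha_def, Finset.sum_apply]
  rw [hset] at hcher
  -- numeric bound
  set c : ℝ := Real.log (a / d) with hc_def
  have had0 : 0 < a / (d:ℝ) := div_pos ha0 hd0
  have hsqrt : Real.sqrt ((1 - 2*t)⁻¹) = Real.exp (c/2) := by
    rw [h1t, inv_div]
    rw [show a/(d:ℝ) = Real.exp (c/2) ^ 2 by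
      rw [sq, ← Real.exp_add]
      norm_num
      rw [hc_def, Real.exp_log had0]]
    exact Real.sqrt_sq (Real.exp_pos _).le
  rw [hsqrt, ← Real.exp_nat_mul] at hcher
  -- c ≤ 2s/d
  have hv0 : (0:ℝ) ≤ 2*s/d := by positivity
  have hq := Real.quadratic_le_exp_of_nonneg hv0
  have haeq : a / (d:ℝ) = 1 + 2*s/d + (2*s/d)^2/2 := by
    have h4 : (2*s/(d:ℝ))^2/2 = 2*x/d := by
      rw [div_pow, mul_pow, hsq]
      field_simp
    rw [h4, ha_def]
    field_simp
  have hc : c ≤ 2*s/d := by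
    rw [hc_def, Real.log_le_iff_le_exp had0, haeq]
    exact hq
  have hdc : (d:ℝ) * c ≤ 2 * s := by
    have h3 := mul_le_mul_of_nonneg_left hc hd0.le
    calc (d:ℝ) * c ≤ (d:ℝ) * (2*s/d) := h3
      _ = 2 * s := by field_simp
  have hta : -t * a = -(a - d)/2 := by
    rw [ht_def]
    field_simp
  have key : Real.exp (-t * a) * Real.exp ((d:ℝ) * (c/2)) ≤ Real.exp (-x) := by
    rw [← Real.exp_add, Real.exp_le_exp, hta]
    simp only [ha_def]
    ring_nf
    nlinarith [hdc]
  have hfin : (μ {ω | (d:ℝ) + 2 * s + 2 * x ≤ ∑ i, G i ω ^ 2}).toReal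
      ≤ Real.exp (-x) := hcher.trans key
  have hne : μ {ω | (d:ℝ) + 2 * s + 2 * x ≤ ∑ i, G i ω ^ 2} ≠ ⊤ := measure_ne_top _ _
  calc μ {ω | (d:ℝ) + 2 * s + 2 * x ≤ ∑ i, G i ω ^ 2}
      = ENNReal.ofReal ((μ {ω | (d:ℝ) + 2 * s + 2 * x ≤ ∑ i, G i ω ^ 2}).toReal) :=
        (ENNReal.ofReal_toReal hne).symm
    _ ≤ ENNReal.ofReal (Real.exp (-x)) := ENNReal.ofReal_le_ofReal hfin
end
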